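/- Let (Ω, F, P) be a probability space, A* : Ω → ℝ and W : Ω → ℝ^d square-integrable random variables, and ε_A, ε_M square-integrable real random variables with mean 0 and variances σγ² and σα² respectively, with ε_A and ε_M independent of each other and the pair (ε_A, ε_M) independent of (A*, W). Define A = γ₀ + γ₁A* + γ₂ᵀW + ε_A, M = α₀ + α₁A + α₂ᵀW + ε_M, and μ_A = γ₀ + γ₁A* + γ₂ᵀW. Then the regression-calibration estimating equations are unbiased at the true parameters: E[(1, μ_A, Wᵀ)ᵀ · (M − α₀ − α₁μ_A − α₂ᵀW)] = 0 (a zero vector in ℝ^{d+2}), and E[(M − α₀ − α₁μ_A − α₂ᵀW)²] = σα² + α₁²σγ². -/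

import Mathlib

open MeasureTheory ProbabilityTheory ENNReal

lemma l2_mul_integrable' {Ω : Type*} [MeasurableSpace Ω] {P : Measure Ω}
    {f g : Ω → ℝ} (hf : MemLp f 2 P) (hg : MemLp g 2 P) :
    Integrable (fun ω => f ω * g ω) P := by
  have h : (1 : ℝ≥0∞) / 1 = 1 / 2 + 1 / 2 := by
    rw [ENNReal.div_add_div_same, one_div_one, one_add_one_eq_two]
    exact (ENNReal.div_self two_ne_zero ENNReal.ofNat_ne_top).symm
  exact memLp_one_iff_integrable.mp (hg.smul (r := 1) hf)

/-- The regression-calibration estimating equations for the mediator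
model are unbiased at the true parameters: with `μ_A = γ₀ + γ₁ A* + γ₂ᵀW`,
`E[(1, μ_A, Wᵀ)ᵀ (M − α₀ − α₁ μ_A − α₂ᵀW)] = 0 ∈ ℝ^{d+2}` and
`E[(M − α₀ − α₁ μ_A − α₂ᵀW)²] = σα² + α₁²σγ²`. -/
theorem stmt_11
    {Ω : Type*} [m0 : MeasurableSpace Ω] (P : Measure Ω) [IsProbabilityMeasure P]
    (d : ℕ) (Astar : Ω → ℝ) (W : Ω → Fin d → ℝ) (εA εM : Ω → ℝ)
    (hAstarMeas : Measurable Astar) (hWMeas : Measurable W)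
    (hεAMeas : Measurable εA) (hεMMeas : Measurable εM)
    (hAstarL2 : MemLp Astar 2 P) (hWL2 : MemLp W 2 P)
    (hεAL2 : MemLp εA 2 P) (hεML2 : MemLp εM 2 P)
    (σγ2 σα2 : ℝ)
    (hmeanA : ∫ ω, εA ω ∂P = 0) (hmeanM : ∫ ω, εM ω ∂P = 0)
    (hvarA : ∫ ω, εA ω ^ 2 ∂P = σγ2) (hvarM : ∫ ω, εM ω ^ 2 ∂P = σα2)
    (hindEps : IndepFun εA εM P)
    (hindObs : IndepFun (fun ω => (εA ω, εM ω)) (fun ω => (Astar ω, W ω)) P)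
    (γ₀ γ₁ α₀ α₁ : ℝ) (γ₂ α₂ : Fin d → ℝ)
    (A M μA : Ω → ℝ)
    (hA : A = fun ω => γ₀ + γ₁ * Astar ω + (∑ i, γ₂ i * W ω i) + εA ω)
    (hM : M = fun ω => α₀ + α₁ * A ω + (∑ i, α₂ i * W ω i) + εM ω)
    (hμA : μA = fun ω => γ₀ + γ₁ * Astar ω + (∑ i, γ₂ i * W ω i)) :
    (∫ ω, (M ω - α₀ - α₁ * μA ω - (∑ i, α₂ i * W ω i)) ∂P = 0) ∧
    (∫ ω, μA ω * (M ω - α₀ - α₁ * μA ω - (∑ i, α₂ i * W ω i)) ∂P = 0) ∧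
    (∀ j : Fin d,
      ∫ ω, W ω j * (M ω - α₀ - α₁ * μA ω - (∑ i, α₂ i * W ω i)) ∂P = 0) ∧
    (∫ ω, (M ω - α₀ - α₁ * μA ω - (∑ i, α₂ i * W ω i)) ^ 2 ∂P
      = σα2 + α₁ ^ 2 * σγ2) := by
  -- The residual equals α₁ εA + εM
  have hres : ∀ ω, M ω - α₀ - α₁ * μA ω - (∑ i, α₂ i * W ω i)
      = α₁ * εA ω + εM ω := by
    intro ω; subst hM hA hμA; ring
  -- component L2 facts
  have hWjL2 : ∀ j : Fin d, MemLp (fun ω => W ω j) 2 P := fun j => by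
    have := (ContinuousLinearMap.proj (R := ℝ) (φ := fun _ : Fin d => ℝ) j).comp_memLp' hWL2
    exact this
  have hμAL2 : MemLp μA 2 P := by
    rw [hμA]
    have h1 : MemLp (fun _ : Ω => γ₀) 2 P := memLp_const _
    have h2 : MemLp (fun ω => γ₁ * Astar ω) 2 P := hAstarL2.const_mul _
    have h3 : MemLp (fun ω => ∑ i, γ₂ i * W ω i) 2 P := by
      have heq : (fun ω => ∑ i, γ₂ i * W ω i)
          = ∑ i : Fin d, fun ω => γ₂ i * W ω i := by
        funext ω; simp
      rw [heq]
      exact memLp_finset_sum' Finset.univ (fun i _ => (hWjL2 i).const_mul _)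
    exact (h1.add h2).add h3
  have hμAMeas : Measurable μA := by
    rw [hμA]; fun_prop
  -- independence facts
  have hεA_μA : IndepFun εA μA P := by
    have h := hindObs.comp (φ := Prod.fst) (ψ := fun q : ℝ × (Fin d → ℝ) =>
      γ₀ + γ₁ * q.1 + ∑ i, γ₂ i * q.2 i) measurable_fst (by fun_prop)
    rw [hμA]; exact h
  have hεM_μA : IndepFun εM μA P := by
    have h := hindObs.comp (φ := Prod.snd) (ψ := fun q : ℝ × (Fin d → ℝ) =>
      γ₀ + γ₁ * q.1 + ∑ i, γ₂ i * q.2 i) measurable_snd (by fun_prop)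
    rw [hμA]; exact h
  have hεA_Wj : ∀ j, IndepFun εA (fun ω => W ω j) P := fun j =>
    hindObs.comp (φ := Prod.fst) (ψ := fun q : ℝ × (Fin d → ℝ) => q.2 j)
      measurable_fst (by fun_prop)
  have hεM_Wj : ∀ j, IndepFun εM (fun ω => W ω j) P := fun j =>
    hindObs.comp (φ := Prod.snd) (ψ := fun q : ℝ × (Fin d → ℝ) => q.2 j)
      measurable_snd (by fun_prop)
  -- integrability
  have hεAint : Integrable εA P := hεAL2.integrable one_le_two
  have hεMint : Integrable εM P := hεML2.integrable one_le_two
  -- key zero expectations of products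
  have hprod : ∀ (g : Ω → ℝ), MemLp g 2 P → IndepFun εA g P → IndepFun εM g P →
      ∫ ω, g ω * (α₁ * εA ω + εM ω) ∂P = 0 := by
    intro g hgL2 h1 h2
    have hi1 : Integrable (fun ω => g ω * εA ω) P := l2_mul_integrable' hgL2 hεAL2
    have hi2 : Integrable (fun ω => g ω * εM ω) P := l2_mul_integrable' hgL2 hεML2
    have e1 : ∫ ω, g ω * εA ω ∂P = (∫ ω, g ω ∂P) * ∫ ω, εA ω ∂P := by
      have := (h1.symm.integral_mul_eq_mul_integral hgL2.aestronglyMeasurable hεAL2.aestronglyMeasurable)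
      simpa [Pi.mul_apply] using this
    have e2 : ∫ ω, g ω * εM ω ∂P = (∫ ω, g ω ∂P) * ∫ ω, εM ω ∂P := by
      have := (h2.symm.integral_mul_eq_mul_integral hgL2.aestronglyMeasurable hεML2.aestronglyMeasurable)
      simpa [Pi.mul_apply] using this
    calc ∫ ω, g ω * (α₁ * εA ω + εM ω) ∂P
        = ∫ ω, (α₁ * (g ω * εA ω) + g ω * εM ω) ∂P := by
          congr 1; funext ω; ring
      _ = α₁ * ∫ ω, g ω * εA ω ∂P + ∫ ω, g ω * εM ω ∂P := by
          have iX : Integrable (fun ω => α₁ * (g ω * εA ω)) P := hi1.const_mul α₁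
          rw [integral_add iX hi2, integral_const_mul]
      _ = 0 := by rw [e1, e2, hmeanA, hmeanM]; ring
  refine ⟨?_, ?_, ?_, ?_⟩
  · simp only [hres]
    have iX : Integrable (fun ω => α₁ * εA ω) P := hεAint.const_mul α₁
    rw [integral_add iX hεMint, integral_const_mul, hmeanA, hmeanM]
    ring
  · simp only [hres]
    exact hprod μA hμAL2 hεA_μA hεM_μA
  · intro j
    simp only [hres]
    exact hprod (fun ω => W ω j) (hWjL2 j) (hεA_Wj j) (hεM_Wj j)
  · simp only [hres]
    have hiAA : Integrable (fun ω => εA ω * εA ω) P := l2_mul_integrable' hεAL2 hεAL2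
    have hiAM : Integrable (fun ω => εA ω * εM ω) P := l2_mul_integrable' hεAL2 hεML2
    have hiMM : Integrable (fun ω => εM ω * εM ω) P := l2_mul_integrable' hεML2 hεML2
    have hvarA' : ∫ ω, εA ω * εA ω ∂P = σγ2 := by
      simpa [sq] using hvarA
    have hvarM' : ∫ ω, εM ω * εM ω ∂P = σα2 := by
      simpa [sq] using hvarM
    have eAM : ∫ ω, εA ω * εM ω ∂P = (∫ ω, εA ω ∂P) * ∫ ω, εM ω ∂P := by
      have := hindEps.integral_mul_eq_mul_integral hεAL2.aestronglyMeasurable hεML2.aestronglyMeasurable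
      simpa [Pi.mul_apply] using this
    calc ∫ ω, (α₁ * εA ω + εM ω) ^ 2 ∂P
        = ∫ ω, (α₁ ^ 2 * (εA ω * εA ω) + ((2 * α₁) * (εA ω * εM ω) + εM ω * εM ω)) ∂P := by
          congr 1; funext ω; ring
      _ = α₁ ^ 2 * (∫ ω, εA ω * εA ω ∂P) + ((2 * α₁) * (∫ ω, εA ω * εM ω ∂P)
            + ∫ ω, εM ω * εM ω ∂P) := by
          have iA2 : Integrable (fun ω => α₁ ^ 2 * (εA ω * εA ω)) P :=
            hiAA.const_mul _
          have iAM2 : Integrable (fun ω => (2 * α₁) * (εA ω * εM ω)) P :=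
            hiAM.const_mul _
          have iY : Integrable (fun ω => (2 * α₁) * (εA ω * εM ω) + εM ω * εM ω) P :=
            iAM2.add hiMM
          rw [integral_add iA2 iY, integral_add iAM2 hiMM, integral_const_mul,
            integral_const_mul]
      _ = σα2 + α₁ ^ 2 * σγ2 := by
          rw [hvarA', hvarM', eAM, hmeanA, hmeanM]; ring
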